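/- arXiv:1411.7056 — 4 statements merged into one kernel-verified Lean document; each statement's English description precedes it below -/
import Mathlib

section
/- Let N₀ ∈ ℕ and C > 0. If a sequence of complex numbers (F_N)_{N∈ℕ} satisfies (i) lim_{N→∞} |F_N|^{1/N} = 0, and (ii) |F_N| ≤ C·∑_{k=N+1}^{∞} |F_k| for all N ≥ N₀ (the series on the right converging absolutely, as guaranteed by (i)), then there exists N₁ ∈ ℕ such that F_N = 0 for all N ≥ N₁. -/
open Filter Topology

/-- **Lemma 3.** Let `N₀ ∈ ℕ` and `C > 0`. If a sequence of complex numbers `(F_N)`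
satisfies (i) `lim_{N→∞} |F_N|^{1/N} = 0` and (ii) `|F_N| ≤ C·∑_{k=N+1}^∞ |F_k|`
for all `N ≥ N₀`, then there is `N₁ ∈ ℕ` such that `F_N = 0` for all `N ≥ N₁`. -/
theorem lemma3 (N₀ : ℕ) (C : ℝ) (hC : 0 < C) (F : ℕ → ℂ)
    (h1 : Tendsto (fun N : ℕ => ‖F N‖ ^ ((1 : ℝ) / N)) atTop (𝓝 0))
    (h2 : ∀ N : ℕ, N₀ ≤ N →
      ‖F N‖ ≤ C * ∑' k : ℕ, ‖F (N + 1 + k)‖) :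
    ∃ N₁ : ℕ, ∀ N : ℕ, N₁ ≤ N → F N = 0 := by
  set a : ℕ → ℝ := fun N => ‖F N‖ with ha
  have ha0 : ∀ N, 0 ≤ a N := fun N => norm_nonneg _
  have hC1 : (0:ℝ) < 1 + C := by linarith
  set ε : ℝ := 1 / (2 * (1 + C)) with hε
  have hε0 : 0 < ε := by positivity
  have hε1 : ε < 1 := by
    rw [hε, div_lt_one (by linarith)]
    linarith
  obtain ⟨M₂, hM₂⟩ := eventually_atTop.mp (h1.eventually (gt_mem_nhds (a := ε) hε0))
  set M : ℕ := max M₂ 1 with hM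
  have hbound : ∀ N, M ≤ N → a N ≤ ε ^ N := by
    intro N hN
    have hN1 : 1 ≤ N := le_trans (le_max_right _ _) hN
    have h := hM₂ N (le_trans (le_max_left _ _) hN)
    have hNne : (N:ℝ) ≠ 0 := Nat.cast_ne_zero.mpr (by omega)
    have hrw : (a N ^ ((1:ℝ)/N)) ^ N = a N := by
      rw [← Real.rpow_natCast (a N ^ ((1:ℝ)/N)) N, ← Real.rpow_mul (ha0 N),
        one_div, inv_mul_cancel₀ hNne, Real.rpow_one]
    calc a N = (a N ^ ((1:ℝ)/N)) ^ N := hrw.symm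
    _ ≤ ε ^ N := pow_le_pow_left₀ (Real.rpow_nonneg (ha0 N) _) h.le N
  have hs : Summable a := by
    have hg : Summable (fun k : ℕ => ε ^ k) := summable_geometric_of_lt_one hε0.le hε1
    have : Summable (fun k => a (k + M)) := by
      apply Summable.of_nonneg_of_le (fun k => ha0 _) (fun k => ?_) hg
      calc a (k + M) ≤ ε ^ (k + M) := hbound _ (Nat.le_add_left _ _)
      _ ≤ ε ^ k := pow_le_pow_of_le_one hε0.le hε1.le (Nat.le_add_right _ _)
    exact (summable_nat_add_iff M).mp this
  have hta : ∀ P : ℕ, Summable (fun k => a (P + 1 + k)) := fun P =>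
    hs.comp_injective (add_right_injective (P + 1))
  set T : ℕ → ℝ := fun P => ∑' k, a (P + 1 + k) with hT
  have hT0 : ∀ P, 0 ≤ T P := fun P => tsum_nonneg (fun k => ha0 _)
  have hTrec : ∀ P, T P = a (P + 1) + T (P + 1) := by
    intro P
    rw [hT]
    simp only
    rw [Summable.tsum_eq_zero_add (hta P)]
    congr 1
    exact tsum_congr fun k => by congr 1; omega
  have hstep : ∀ P, N₀ ≤ P → T P ≤ (1 + C) * T (P + 1) := by
    intro P hP
    have h := h2 (P + 1) (by omega)
    have : a (P + 1) ≤ C * T (P + 1) := h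
    have := hTrec P
    nlinarith [hT0 (P + 1)]
  have hiter : ∀ m, T N₀ ≤ (1 + C) ^ m * T (N₀ + m) := by
    intro m
    induction m with
    | zero => simp
    | succ m ih =>
      calc T N₀ ≤ (1 + C) ^ m * T (N₀ + m) := ih
      _ ≤ (1 + C) ^ m * ((1 + C) * T (N₀ + m + 1)) :=
          mul_le_mul_of_nonneg_left (hstep _ (by omega)) (pow_nonneg hC1.le m)
      _ = (1 + C) ^ (m + 1) * T (N₀ + (m + 1)) := by ring
  have htail : ∀ P, M ≤ P → T P ≤ ε ^ (P + 1) * (1 - ε)⁻¹ := by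
    intro P hP
    have hg : Summable (fun k : ℕ => ε ^ (P + 1) * ε ^ k) :=
      (summable_geometric_of_lt_one hε0.le hε1).mul_left _
    have h1' : T P ≤ ∑' k, ε ^ (P + 1) * ε ^ k := by
      apply Summable.tsum_le_tsum (fun k => ?_) (hta P) hg
      calc a (P + 1 + k) ≤ ε ^ (P + 1 + k) := hbound _ (by omega)
      _ = ε ^ (P + 1) * ε ^ k := pow_add ε _ _
    calc T P ≤ ∑' k, ε ^ (P + 1) * ε ^ k := h1'
    _ = ε ^ (P + 1) * (1 - ε)⁻¹ := by
        rw [tsum_mul_left, tsum_geometric_of_lt_one hε0.le hε1]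
  have hkey : (1 + C) * ε = 1 / 2 := by
    rw [hε]; field_simp
  have hbig : ∀ m, M ≤ m → T N₀ ≤ (1/2 : ℝ) ^ m * (ε ^ (N₀ + 1) * (1 - ε)⁻¹) := by
    intro m hm
    calc T N₀ ≤ (1 + C) ^ m * T (N₀ + m) := hiter m
    _ ≤ (1 + C) ^ m * (ε ^ (N₀ + m + 1) * (1 - ε)⁻¹) :=
        mul_le_mul_of_nonneg_left (htail _ (by omega)) (pow_nonneg hC1.le m)
    _ = ((1 + C) * ε) ^ m * (ε ^ (N₀ + 1) * (1 - ε)⁻¹) := by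
        rw [mul_pow, show N₀ + m + 1 = (N₀ + 1) + m from by omega, pow_add]
        ring
    _ = (1/2 : ℝ) ^ m * (ε ^ (N₀ + 1) * (1 - ε)⁻¹) := by rw [hkey]
  have htend : Tendsto (fun m : ℕ => (1/2 : ℝ) ^ m * (ε ^ (N₀ + 1) * (1 - ε)⁻¹))
      atTop (𝓝 0) := by
    simpa using (tendsto_pow_atTop_nhds_zero_of_lt_one (by norm_num) (by norm_num :
      (1/2:ℝ) < 1)).mul_const (ε ^ (N₀ + 1) * (1 - ε)⁻¹)
  have hTle : T N₀ ≤ 0 := ge_of_tendsto htend (eventually_atTop.mpr ⟨M, hbig⟩)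
  have hTeq : T N₀ = 0 := le_antisymm hTle (hT0 N₀)
  refine ⟨N₀ + 1, fun N hN => ?_⟩
  have hk : a (N₀ + 1 + (N - N₀ - 1)) ≤ T N₀ :=
    Summable.le_tsum (hta N₀) _ (fun j _ => ha0 _)
  rw [show N₀ + 1 + (N - N₀ - 1) = N by omega] at hk
  have : a N = 0 := le_antisymm (by linarith [hTeq ▸ hk]) (ha0 N)
  exact norm_eq_zero.mp this
end

section
/- Let C > 0 and M ∈ ℕ. If a sequence of complex numbers (F_N) satisfies, for all N ≥ M, both |F_N| ≤ (1/(C+2))^N and |F_N| ≤ C·∑_{k=N+1}^{∞} |F_k| (the series converging absolutely), then for every nonnegative integer n and every N ≥ M one has |F_N| ≤ (C/(C+1))^n · (1/(C+2))^N. Consequently F_N = 0 for all N ≥ M. -/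
open Filter Topology

/-- Let `C > 0` and `M ∈ ℕ`. If a sequence of complex numbers `(F_N)` satisfies, for all
`N ≥ M`, both `|F_N| ≤ (1/(C+2))^N` and `|F_N| ≤ C·∑_{k=N+1}^∞ |F_k|` (the series
converging absolutely), then for every nonnegative integer `n` and every `N ≥ M` one has
`|F_N| ≤ (C/(C+1))^n · (1/(C+2))^N`. Consequently `F_N = 0` for all `N ≥ M`. -/
theorem claim_in_lemma3 (M : ℕ) (C : ℝ) (hC : 0 < C) (F : ℕ → ℂ)
    (h1 : ∀ N : ℕ, M ≤ N → ‖F N‖ ≤ (1 / (C + 2)) ^ N)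
    (h2 : ∀ N : ℕ, M ≤ N →
      ‖F N‖ ≤ C * ∑' k : ℕ, ‖F (N + 1 + k)‖) :
    (∀ n N : ℕ, M ≤ N →
      ‖F N‖ ≤ (C / (C + 1)) ^ n * (1 / (C + 2)) ^ N) ∧
    (∀ N : ℕ, M ≤ N → F N = 0) := by
  have hC2 : (0:ℝ) < C + 2 := by linarith
  have hC1 : (0:ℝ) < C + 1 := by linarith
  set q : ℝ := 1 / (C + 2) with hqdef
  set r : ℝ := C / (C + 1) with hrdef
  have hq0 : 0 < q := by positivity
  have hq1 : q < 1 := by rw [hqdef, div_lt_one hC2]; linarith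
  have hr0 : 0 ≤ r := by positivity
  have hr1 : r < 1 := by rw [hrdef, div_lt_one hC1]; linarith
  have hgeo : Summable (fun k : ℕ => q ^ k) := summable_geometric_of_lt_one hq0.le hq1
  have main : ∀ n N : ℕ, M ≤ N → ‖F N‖ ≤ r ^ n * q ^ N := by
    intro n
    induction n with
    | zero => intro N hN; simpa using h1 N hN
    | succ n ih =>
      intro N hN
      have hsumRHS : Summable (fun k : ℕ => r ^ n * q ^ (N + 1 + k)) := by
        have : Summable (fun k : ℕ => (r ^ n * q ^ (N + 1)) * q ^ k) := hgeo.mul_left _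
        refine this.congr fun k => ?_
        ring
      have hsumF : Summable (fun k : ℕ => ‖F (N + 1 + k)‖) := by
        refine Summable.of_nonneg_of_le (fun k => norm_nonneg _)
          (fun k => ?_) hsumRHS
        exact ih (N + 1 + k) (by omega)
      have hts : (∑' k : ℕ, ‖F (N + 1 + k)‖) ≤
          ∑' k : ℕ, r ^ n * q ^ (N + 1 + k) :=
        Summable.tsum_le_tsum (fun k => ih (N + 1 + k) (by omega)) hsumF hsumRHS
      have hval : (∑' k : ℕ, r ^ n * q ^ (N + 1 + k)) =
          r ^ n * q ^ (N + 1) * (1 - q)⁻¹ := by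
        calc (∑' k : ℕ, r ^ n * q ^ (N + 1 + k))
            = ∑' k : ℕ, (r ^ n * q ^ (N + 1)) * q ^ k := by
              refine tsum_congr fun k => ?_
              ring
          _ = (r ^ n * q ^ (N + 1)) * ∑' k : ℕ, q ^ k := tsum_mul_left
          _ = r ^ n * q ^ (N + 1) * (1 - q)⁻¹ := by
              rw [tsum_geometric_of_lt_one hq0.le hq1]
      have key : ‖F N‖ ≤ C * (r ^ n * q ^ (N + 1) * (1 - q)⁻¹) := by
        calc ‖F N‖ ≤ C * ∑' k : ℕ, ‖F (N + 1 + k)‖ := h2 N hN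
          _ ≤ C * (r ^ n * q ^ (N + 1) * (1 - q)⁻¹) := by
              rw [← hval]; exact mul_le_mul_of_nonneg_left hts hC.le
      refine key.trans_eq ?_
      have h1q : 1 - q = (C + 1) / (C + 2) := by
        rw [hqdef]; field_simp; ring
      rw [h1q, hqdef, hrdef]
      rw [pow_succ (C / (C + 1)) n]
      field_simp
      ring
      have ha : (2 + C)⁻¹ * (2 + C) = 1 := inv_mul_cancel₀ (by linarith)
      linear_combination (2 + C)⁻¹ ^ N * ha
  refine ⟨main, fun N hN => ?_⟩
  have habs : ‖F N‖ = 0 := by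
    have hlim : Tendsto (fun n : ℕ => r ^ n * q ^ N) atTop (𝓝 (0 * q ^ N)) :=
      (tendsto_pow_atTop_nhds_zero_of_lt_one hr0 hr1).mul_const _
    rw [zero_mul] at hlim
    have := le_of_tendsto_of_tendsto' tendsto_const_nhds hlim (fun n => main n N hN)
    exact le_antisymm this (norm_nonneg _)
  exact norm_eq_zero.mp habs
end

section
/- Suppose μ ∈ R(E). Then κ_n/κ_{n+1} → 1/γ as n → ∞, where γ := lim_{z→∞} Φ(z)/z (under the paper's normalization, 1/γ is the logarithmic capacity of E). -/
open MeasureTheory Polynomial Filter Topology Set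
open scoped ENNReal

/-- The inner product `⟨g,h⟩_μ := ∫ g(ζ)·conj(h(ζ)) dμ(ζ)`. -/
noncomputable def innerMu (μ : Measure ℂ) (g h : ℂ → ℂ) : ℂ :=
  ∫ ζ, g ζ * (starRingEnd ℂ) (h ζ) ∂μ

/-- The (topological) support of a measure on `ℂ`: the set of points all of whose
neighborhoods have positive measure. -/
def measSupp (μ : Measure ℂ) : Set ℂ :=
  {z : ℂ | ∀ U ∈ nhds z, μ U ≠ 0}

/-- The second type functions `s_n(z) := ∫ conj(p_n(ζ))/(z − ζ) dμ(ζ)`. -/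
noncomputable def secondKind (μ : Measure ℂ) (p : ℕ → Polynomial ℂ) (n : ℕ) (z : ℂ) : ℂ :=
  ∫ ζ, (starRingEnd ℂ) ((p n).eval ζ) / (z - ζ) ∂μ

lemma aux_inv_pow (m : ℕ) (hm : 0 < m) :
    Tendsto (fun z : ℂ => (z ^ m)⁻¹) (Bornology.cobounded ℂ) (𝓝 0) := by
  have h1 : Tendsto (fun z : ℂ => ‖z‖ ^ m) (Bornology.cobounded ℂ) atTop :=
    (tendsto_pow_atTop hm.ne').comp tendsto_norm_cobounded_atTop
  rw [tendsto_zero_iff_norm_tendsto_zero]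
  simpa [norm_inv, norm_pow, Pi.inv_def] using h1.inv_tendsto_atTop

lemma aux_ev_ne_zero : ∀ᶠ z : ℂ in Bornology.cobounded ℂ, z ≠ 0 := by
  filter_upwards [eventually_cobounded_le_norm (E := ℂ) 1] with z hz
  intro h; rw [h] at hz; simp at hz; linarith

lemma aux_eval_div_pow_zero : ∀ (k : ℕ) (P : ℂ[X]), P.degree < (k : ℕ) →
    Tendsto (fun z : ℂ => P.eval z / z ^ k) (Bornology.cobounded ℂ) (𝓝 0) := by
  intro k
  induction k with
  | zero =>
    intro P hP
    have : P = 0 := by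
      rw [← Polynomial.degree_eq_bot]
      exact Nat.WithBot.lt_zero_iff.mp (by exact_mod_cast hP)
    simp [this]
  | succ k ih =>
    intro P hP
    by_cases hP0 : P = 0
    · simp [hP0]
    have hdvx : (P.divX).degree < (k : ℕ) := by
      by_cases hdv : P.divX = 0
      · rw [hdv, Polynomial.degree_zero]; exact WithBot.bot_lt_coe k
      · rw [← Polynomial.natDegree_lt_iff_degree_lt hdv]
        have h1 : P.natDegree < k + 1 :=
          (Polynomial.natDegree_lt_iff_degree_lt hP0).mpr (by exact_mod_cast hP)
        have h2 : P.divX.natDegree = P.natDegree - 1 :=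
          Polynomial.natDegree_divX_eq_natDegree_tsub_one
        have h3 : 1 ≤ P.natDegree := by
          by_contra h
          push_neg at h
          exact hdv (Polynomial.divX_eq_zero_iff.mpr
            (Polynomial.eq_C_of_natDegree_le_zero (by omega)))
        omega
    have key := (ih P.divX hdvx).add ((aux_inv_pow (k+1) k.succ_pos).const_mul (P.coeff 0))
    rw [mul_zero, add_zero] at key
    refine key.congr' ?_
    filter_upwards [aux_ev_ne_zero] with z hz
    have hev : P.eval z = z * (P.divX).eval z + P.coeff 0 := by
      nth_rewrite 1 [← Polynomial.X_mul_divX_add P]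
      rw [Polynomial.eval_add, Polynomial.eval_mul, Polynomial.eval_X, Polynomial.eval_C]
    rw [hev]
    field_simp
    ring

lemma aux_eval_div_pow_lead (Q : ℂ[X]) (hQ : Q ≠ 0) :
    Tendsto (fun z : ℂ => Q.eval z / z ^ Q.natDegree) (Bornology.cobounded ℂ)
      (𝓝 Q.leadingCoeff) := by
  have hdeg : Q.eraseLead.degree < (Q.natDegree : ℕ) := by
    have := Polynomial.degree_eraseLead_lt hQ
    rwa [Polynomial.degree_eq_natDegree hQ] at this
  have key := (aux_eval_div_pow_zero Q.natDegree Q.eraseLead hdeg).add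
    (tendsto_const_nhds (x := Q.leadingCoeff) (f := Bornology.cobounded ℂ))
  rw [zero_add] at key
  refine key.congr' ?_
  filter_upwards [aux_ev_ne_zero] with z hz
  have hev : Q.eval z = Q.eraseLead.eval z + Q.leadingCoeff * z ^ Q.natDegree := by
    nth_rewrite 1 [← Polynomial.eraseLead_add_C_mul_X_pow Q]
    rw [Polynomial.eval_add, Polynomial.eval_mul, Polynomial.eval_C, Polynomial.eval_pow,
      Polynomial.eval_X]
  rw [hev]
  have hzp : z ^ Q.natDegree ≠ 0 := pow_ne_zero _ hz
  field_simp

lemma aux_poly_div_zero (P Q : ℂ[X]) (h : P.degree < Q.degree) :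
    Tendsto (fun z : ℂ => P.eval z / Q.eval z) (Bornology.cobounded ℂ) (𝓝 0) := by
  have hQ0 : Q ≠ 0 := by
    rintro rfl
    simp only [Polynomial.degree_zero] at h
    exact absurd h (by simp)
  have hd : P.degree < (Q.natDegree : ℕ) := by
    rwa [Polynomial.degree_eq_natDegree hQ0] at h
  have h1 := aux_eval_div_pow_zero Q.natDegree P hd
  have h2 := aux_eval_div_pow_lead Q hQ0
  have h3 := h1.div h2 (Polynomial.leadingCoeff_ne_zero.mpr hQ0)
  rw [zero_div] at h3
  refine h3.congr' ?_
  filter_upwards [aux_ev_ne_zero] with z hz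
  by_cases hq : Q.eval z = 0
  · simp [hq]
  · have hzp : z ^ Q.natDegree ≠ 0 := pow_ne_zero _ hz
    simp only [Pi.div_apply]
    field_simp

lemma aux_ev_poly_ne_zero (Q : ℂ[X]) (hQ : Q ≠ 0) :
    ∀ᶠ z : ℂ in Bornology.cobounded ℂ, Q.eval z ≠ 0 := by
  have h2 := aux_eval_div_pow_lead Q hQ
  have := h2.eventually_ne (Polynomial.leadingCoeff_ne_zero.mpr hQ)
  filter_upwards [this] with z hz hq
  rw [hq, zero_div] at hz
  exact hz rfl

lemma aux_claim1 {B R : ℝ} (hB : 0 < B) (hR : B < R)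
    (g : ℂ → ℂ) (L : ℂ)
    (hg : ∀ z : ℂ, B < ‖z‖ → DifferentiableAt ℂ g z)
    (hlim : Tendsto (fun z : ℂ => z * g z - L) (Bornology.cobounded ℂ) (𝓝 0)) :
    (∮ z in C(0, R), g z) = 2 * Real.pi * Complex.I * L := by
  have hRpos : 0 < R := hB.trans hR
  set F : ℂ → ℂ := fun z => g z - L * z⁻¹ with hF
  have hne : ∀ z : ℂ, B < ‖z‖ → z ≠ 0 := by
    intro z hz h; rw [h] at hz; simp at hz; linarith
  have hFdiff : ∀ z : ℂ, B < ‖z‖ → DifferentiableAt ℂ F z := fun z hz =>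
    (hg z hz).sub ((differentiableAt_id.inv (hne z hz)).const_mul L)
  -- constancy of the circle integral of F in the radius
  have hconst : ∀ R' : ℝ, R ≤ R' → (∮ z in C(0, R'), F z) = ∮ z in C(0, R), F z := by
    intro R' hR'
    refine Complex.circleIntegral_eq_of_differentiable_on_annulus_off_countable hRpos hR'
      Set.countable_empty ?_ ?_
    · intro z hz
      have hz' : B < ‖z‖ := by
        have h2 := hz.2
        simp only [Metric.mem_ball, Complex.dist_eq, sub_zero, not_lt] at h2
        exact lt_of_lt_of_le hR h2
      exact ((hFdiff z hz').continuousAt).continuousWithinAt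
    · intro z hz
      have hz' : B < ‖z‖ := by
        have h2 := hz.1.2
        simp only [Metric.mem_closedBall, Complex.dist_eq, sub_zero, not_le] at h2
        exact hR.trans h2
      exact hFdiff z hz'
  -- the integral of F vanishes
  have hlimF : Tendsto (fun z : ℂ => z * F z) (Bornology.cobounded ℂ) (𝓝 0) := by
    refine hlim.congr' ?_
    filter_upwards [aux_ev_ne_zero] with z hz
    rw [hF]
    field_simp
  have hFzero : (∮ z in C(0, R), F z) = 0 := by
    rw [← norm_eq_zero]
    refine le_antisymm ?_ (norm_nonneg _)
    refine le_of_forall_pos_le_add ?_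
    intro ε hε
    rw [zero_add]
    have hev : ∀ᶠ z : ℂ in Bornology.cobounded ℂ, ‖z * F z‖ ≤ ε / (2 * Real.pi + 1) := by
      have h1 := (hlimF.eventually (Metric.closedBall_mem_nhds 0
        (by positivity : (0:ℝ) < ε / (2 * Real.pi + 1))))
      filter_upwards [h1] with z hz
      simpa [Complex.dist_eq] using hz
    rw [← comap_norm_atTop, eventually_comap, eventually_atTop] at hev
    obtain ⟨M, hM⟩ := hev
    set R' : ℝ := max R (max M 1) with hR'
    have hRR' : R ≤ R' := le_max_left _ _
    have hR'pos : 0 < R' := lt_of_lt_of_le hRpos hRR'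
    rw [← hconst R' hRR']
    have hbound : ∀ z ∈ Metric.sphere (0:ℂ) R', ‖F z‖ ≤ (ε / (2 * Real.pi + 1)) / R' := by
      intro z hz
      rw [Metric.mem_sphere, Complex.dist_eq, sub_zero] at hz
      have hzn : ‖z‖ = R' := by exact hz
      have h2 : ‖z * F z‖ ≤ ε / (2 * Real.pi + 1) := by
        refine hM ‖z‖ ?_ z rfl
        rw [hzn]; exact le_trans (le_max_left _ _) (le_max_right _ _)
      rw [norm_mul, hzn] at h2
      rw [← le_div_iff₀' hR'pos] at h2
      exact h2
    have h3 := circleIntegral.norm_integral_le_of_norm_le_const hR'pos.le hbound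
    have h4 : 2 * Real.pi / (2 * Real.pi + 1) ≤ 1 := by
      rw [div_le_one (by positivity)]; linarith
    calc ‖∮ z in C(0, R'), F z‖ ≤ 2 * Real.pi * R' * ((ε / (2 * Real.pi + 1)) / R') := h3
    _ = ε * (2 * Real.pi / (2 * Real.pi + 1)) := by field_simp
    _ ≤ ε * 1 := mul_le_mul_of_nonneg_left h4 hε.le
    _ = ε := mul_one ε
  -- split g = F + L * z⁻¹
  have hsphere : ∀ z ∈ Metric.sphere (0:ℂ) R, B < ‖z‖ ∧ z ≠ 0 := by
    intro z hz
    rw [Metric.mem_sphere, Complex.dist_eq, sub_zero] at hz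
    have h1 : B < ‖z‖ := by rw [hz]; exact hR
    exact ⟨h1, hne z h1⟩
  have hgint : CircleIntegrable g 0 R := by
    refine ContinuousOn.circleIntegrable hRpos.le ?_
    intro z hz
    exact ((hg z (hsphere z hz).1).continuousAt).continuousWithinAt
  have hLint : CircleIntegrable (fun z : ℂ => L * z⁻¹) 0 R := by
    refine ContinuousOn.circleIntegrable hRpos.le ?_
    exact (continuousOn_const.mul (continuousOn_id.inv₀ (fun z hz => (hsphere z hz).2)))
  have hsub := circleIntegral.integral_sub hgint hLint
  have hFeq : (∮ z in C(0, R), F z) = (∮ z in C(0, R), g z) - ∮ z in C(0, R), L * z⁻¹ := hsub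
  have hLval : (∮ z in C(0, R), L * z⁻¹) = L * (2 * Real.pi * Complex.I) := by
    have h0 : (0:ℂ) ∈ Metric.ball (0:ℂ) R := by simp [hRpos]
    have h5 := circleIntegral.integral_sub_inv_of_mem_ball h0
    have h6 : (∮ z in C(0, R), L * z⁻¹) = L * ∮ z in C(0, R), z⁻¹ :=
      circleIntegral.integral_const_mul L _ 0 R
    rw [h6]
    have h7 : (∮ z in C(0, R), z⁻¹) = ∮ z in C(0, R), (z - 0)⁻¹ := by
      refine circleIntegral.integral_congr hRpos.le ?_
      intro z hz; simp
    rw [h7, h5]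
  rw [hFeq, hLval] at hFzero
  have := sub_eq_zero.mp hFzero
  rw [this]
  ring

lemma aux_ae_mem_measSupp (μ : Measure ℂ) : ∀ᵐ z ∂μ, z ∈ measSupp μ := by
  rw [MeasureTheory.ae_iff]
  apply MeasureTheory.measure_null_of_locally_null
  intro x hx
  simp only [measSupp, Set.mem_setOf_eq, not_forall] at hx
  obtain ⟨U, hU, hU0⟩ := hx
  push_neg at hU0
  exact ⟨U, nhdsWithin_le_nhds hU, hU0⟩

lemma aux_integrable {μ : Measure ℂ} [IsFiniteMeasure μ] {E : Set ℂ} (hE : IsCompact E)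
    (hsupp : measSupp μ ⊆ E) {F : Type*} [NormedAddCommGroup F] (f : ℂ → F)
    (hf : Continuous f) : Integrable f μ := by
  obtain ⟨C, hC⟩ := hE.exists_bound_of_continuousOn hf.continuousOn
  refine (integrable_const C).mono' hf.aestronglyMeasurable ?_
  filter_upwards [aux_ae_mem_measSupp μ] with z hz
  exact hC z (hsupp hz)

lemma aux_inner_split (μ : Measure ℂ) [IsFiniteMeasure μ] {E : Set ℂ} (hE : IsCompact E)
    (hsupp : measSupp μ ⊆ E) (f : ℂ[X]) (c : ℂ) (g r : ℂ[X]) :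
    innerMu μ (fun z => f.eval z) (fun z => (Polynomial.C c * g + r).eval z) =
      (starRingEnd ℂ) c * innerMu μ (fun z => f.eval z) (fun z => g.eval z) +
        innerMu μ (fun z => f.eval z) (fun z => r.eval z) := by
  unfold innerMu
  have hint1 : Integrable (fun ζ => f.eval ζ * (starRingEnd ℂ) (g.eval ζ)) μ :=
    aux_integrable hE hsupp _ (by continuity)
  have hint2 : Integrable (fun ζ => f.eval ζ * (starRingEnd ℂ) (r.eval ζ)) μ :=
    aux_integrable hE hsupp _ (by continuity)
  have heq : (fun ζ => f.eval ζ * (starRingEnd ℂ) ((Polynomial.C c * g + r).eval ζ)) =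
      fun ζ => (starRingEnd ℂ) c * (f.eval ζ * (starRingEnd ℂ) (g.eval ζ)) +
        f.eval ζ * (starRingEnd ℂ) (r.eval ζ) := by
    funext ζ
    rw [Polynomial.eval_add, Polynomial.eval_mul, Polynomial.eval_C, map_add, map_mul]
    ring
  rw [heq, MeasureTheory.integral_add ((hint1.const_mul _)) hint2,
    MeasureTheory.integral_const_mul]

lemma aux_orth_lower (μ : Measure ℂ) [IsFiniteMeasure μ] {E : Set ℂ} (hEcomp : IsCompact E)
    (hsuppE : measSupp μ ⊆ E) (p : ℕ → Polynomial ℂ)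
    (hdeg : ∀ n : ℕ, (p n).degree = n)
    (hlead0 : ∀ n : ℕ, (p n).leadingCoeff ≠ 0)
    (horth : ∀ n k : ℕ,
      innerMu μ (fun z => (p n).eval z) (fun z => (p k).eval z) = if n = k then 1 else 0) :
    ∀ (d m : ℕ) (q : Polynomial ℂ), q.natDegree ≤ d → q.degree < (m : ℕ) →
      innerMu μ (fun z => (p m).eval z) (fun z => q.eval z) = 0 := by
  intro d
  induction d with
  | zero =>
    intro m q hqd hqm
    by_cases hq0 : q = 0
    · simp [innerMu, hq0]
    have hq : q = Polynomial.C (q.coeff 0) := Polynomial.eq_C_of_natDegree_le_zero hqd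
    have hm : m ≠ 0 := by
      intro h
      rw [h] at hqm
      rw [Polynomial.degree_eq_natDegree hq0] at hqm
      exact absurd hqm (by simp)
    -- p 0 is a nonzero constant
    have hp0deg : (p 0).natDegree = 0 := Polynomial.natDegree_eq_zero_iff_degree_le_zero.mpr
      (le_of_eq (by exact_mod_cast hdeg 0))
    have hp0 : p 0 = Polynomial.C ((p 0).coeff 0) := Polynomial.eq_C_of_natDegree_le_zero hp0deg.le
    have hc0 : (p 0).coeff 0 ≠ 0 := by
      intro h
      have h0 : p 0 = 0 := by rw [hp0, h, map_zero]
      have h2 := hdeg 0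
      rw [h0, Polynomial.degree_zero] at h2
      exact absurd h2 (by simp)
    -- q = C c * p 0 + 0 with c = coeff 0 / (p 0).coeff 0
    have hqrep : q = Polynomial.C (q.coeff 0 / (p 0).coeff 0) * p 0 + 0 := by
      rw [add_zero]
      nth_rewrite 2 [hp0]
      rw [← map_mul, div_mul_cancel₀ _ hc0]
      exact hq
    rw [hqrep, aux_inner_split μ hEcomp hsuppE _ _ _ _]
    rw [horth m 0]
    simp [innerMu, hm]
  | succ d ih =>
    intro m q hqd hqm
    by_cases hq0 : q = 0
    · simp [innerMu, hq0]
    by_cases hqd' : q.natDegree ≤ d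
    · exact ih m q hqd' hqm
    have hdq : q.natDegree = d + 1 := le_antisymm hqd (by omega)
    set k := d + 1 with hk
    have hkm : k < m := by
      have := (Polynomial.natDegree_lt_iff_degree_lt hq0).mpr hqm
      omega
    set c := q.leadingCoeff / (p k).leadingCoeff with hc
    set r := q - Polynomial.C c * p k with hr
    have hc0 : c ≠ 0 := div_ne_zero (Polynomial.leadingCoeff_ne_zero.2 hq0) (hlead0 k)
    have hdegq : q.degree = (k : ℕ) := by rw [Polynomial.degree_eq_natDegree hq0, hdq]
    have hdegCk : (Polynomial.C c * p k).degree = (k : ℕ) := by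
      rw [Polynomial.degree_C_mul hc0, hdeg k]
    have hlcCk : (Polynomial.C c * p k).leadingCoeff = q.leadingCoeff := by
      rw [Polynomial.leadingCoeff_mul, Polynomial.leadingCoeff_C, hc,
        div_mul_cancel₀ _ (hlead0 k)]
    have hrdeg : r.degree < (k : ℕ) := by
      rw [hr, ← hdegq]
      exact Polynomial.degree_sub_lt (by rw [hdegq, hdegCk]) hq0 hlcCk.symm
    have hrd : r.natDegree ≤ d := by
      by_cases hr0 : r = 0
      · simp [hr0]
      have := (Polynomial.natDegree_lt_iff_degree_lt hr0).mpr hrdeg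
      omega
    have hrm : r.degree < (m : ℕ) := hrdeg.trans_le (by exact_mod_cast Nat.le_of_lt hkm)
    have hqrep : q = Polynomial.C c * p k + r := by rw [hr]; ring
    rw [hqrep, aux_inner_split μ hEcomp hsuppE _ _ _ _, horth m k,
      if_neg (by omega : m ≠ k), ih m r hrd hrm]
    simp

lemma aux_roots_bound (μ : Measure ℂ) [IsFiniteMeasure μ]
    (hsuppInf : (measSupp μ).Infinite) {E : Set ℂ} (hEcomp : IsCompact E)
    (hsuppE : measSupp μ ⊆ E) (p : ℕ → Polynomial ℂ)
    (hdeg : ∀ n : ℕ, (p n).degree = n)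
    (hlead0 : ∀ n : ℕ, (p n).leadingCoeff ≠ 0)
    (horth : ∀ n k : ℕ,
      innerMu μ (fun z => (p n).eval z) (fun z => (p k).eval z) = if n = k then 1 else 0)
    {B : ℝ} (hB : 0 < B) (hEB : E ⊆ Metric.closedBall 0 B) :
    ∀ (m : ℕ) (z0 : ℂ), (p m).eval z0 = 0 → ‖z0‖ ≤ B := by
  intro m z0 hz0
  by_contra hgt
  push_neg at hgt
  have hpm0 : p m ≠ 0 := by
    intro h
    have h2 := hdeg m
    rw [h, Polynomial.degree_zero] at h2
    exact absurd h2 (by simp)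
  obtain ⟨q, hq⟩ : Polynomial.X - Polynomial.C z0 ∣ p m := Polynomial.dvd_iff_isRoot.2 hz0
  have hq0 : q ≠ 0 := by rintro rfl; rw [mul_zero] at hq; exact hpm0 hq
  have hdq : q.degree < (m : ℕ) := by
    have h2 := hdeg m
    rw [hq, Polynomial.degree_mul, Polynomial.degree_X_sub_C] at h2
    have h3 : q.degree < 1 + q.degree := by
      rw [Polynomial.degree_eq_natDegree hq0]
      exact_mod_cast lt_of_lt_of_eq (Nat.lt_succ_self _) (by omega)
    rw [h2] at h3
    exact h3
  have hqcont : Continuous fun x : ℂ => q.eval x := q.continuous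
  have hnsqcont : Continuous fun ζ : ℂ => ((Complex.normSq (q.eval ζ) : ℝ) : ℂ) :=
    Complex.continuous_ofReal.comp (Complex.continuous_normSq.comp hqcont)
  have horthq : innerMu μ (fun z => (p m).eval z) (fun z => q.eval z) = 0 :=
    aux_orth_lower μ hEcomp hsuppE p hdeg hlead0 horth q.natDegree m q le_rfl hdq
  -- rewrite the inner product
  have hinner : innerMu μ (fun z => (p m).eval z) (fun z => q.eval z) =
      ∫ ζ, (ζ - z0) * ((Complex.normSq (q.eval ζ) : ℝ) : ℂ) ∂μ := by
    unfold innerMu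
    refine MeasureTheory.integral_congr_ae (Filter.Eventually.of_forall fun ζ => ?_)
    simp only [hq, Polynomial.eval_mul, Polynomial.eval_sub, Polynomial.eval_X,
      Polynomial.eval_C, mul_assoc, Complex.mul_conj]
  -- real part bound
  set nsq : ℂ → ℝ := fun ζ => Complex.normSq (q.eval ζ) with hnsq
  set f : ℂ → ℝ := fun ζ => ((starRingEnd ℂ) z0 * ((ζ - z0) * ((nsq ζ : ℝ) : ℂ))).re with hf
  set dd : ℝ := ‖z0‖ * (‖z0‖ - B) with hdd
  have hddpos : 0 < dd := mul_pos (lt_trans hB hgt) (by linarith)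
  have hint1 : Integrable (fun ζ => (starRingEnd ℂ) z0 * ((ζ - z0) * ((nsq ζ : ℝ) : ℂ))) μ :=
    aux_integrable hEcomp hsuppE _
      (continuous_const.mul ((continuous_id.sub continuous_const).mul hnsqcont))
  have hintf : Integrable f μ := hint1.re
  have hint2 : Integrable nsq μ :=
    aux_integrable hEcomp hsuppE _ (Complex.continuous_normSq.comp hqcont)
  have hre0 : ∫ ζ, f ζ ∂μ = 0 := by
    have h8 := _root_.integral_re (𝕜 := ℂ) hint1
    simp only [RCLike.re_to_complex] at h8
    rw [hf]
    rw [h8, MeasureTheory.integral_const_mul, ← hinner, horthq, mul_zero, Complex.zero_re]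
  have hptwise : ∀ ζ ∈ measSupp μ, f ζ ≤ -dd * nsq ζ := by
    intro ζ hζ
    have hζB : ‖ζ‖ ≤ B := by
      have := hEB (hsuppE hζ)
      simpa [Complex.dist_eq] using this
    have h1 : f ζ = nsq ζ * ((starRingEnd ℂ) z0 * (ζ - z0)).re := by
      have heq : (starRingEnd ℂ) z0 * ((ζ - z0) * ((nsq ζ : ℝ) : ℂ)) =
          ((nsq ζ : ℝ) : ℂ) * ((starRingEnd ℂ) z0 * (ζ - z0)) := by ring
      simp only [hf]
      rw [heq, Complex.re_ofReal_mul]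
    have h2 : ((starRingEnd ℂ) z0 * (ζ - z0)).re ≤ -dd := by
      have ha : (starRingEnd ℂ) z0 * (ζ - z0) =
          (starRingEnd ℂ) z0 * ζ - (starRingEnd ℂ) z0 * z0 := by ring
      have hb : ((starRingEnd ℂ) z0 * z0).re = ‖z0‖ ^ 2 := by
        rw [mul_comm, Complex.mul_conj, Complex.normSq_eq_norm_sq, Complex.ofReal_re]
      have hc : ((starRingEnd ℂ) z0 * ζ).re ≤ ‖z0‖ * B := by
        calc ((starRingEnd ℂ) z0 * ζ).re ≤ |((starRingEnd ℂ) z0 * ζ).re| := le_abs_self _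
        _ ≤ ‖(starRingEnd ℂ) z0 * ζ‖ := Complex.abs_re_le_norm _
        _ = ‖z0‖ * ‖ζ‖ := by
            rw [norm_mul, Complex.norm_conj]
        _ ≤ ‖z0‖ * B := mul_le_mul_of_nonneg_left hζB (norm_nonneg _)
      rw [ha, Complex.sub_re, hb, hdd]
      nlinarith [hc]
    rw [h1]
    calc nsq ζ * ((starRingEnd ℂ) z0 * (ζ - z0)).re ≤ nsq ζ * (-dd) :=
          mul_le_mul_of_nonneg_left h2 (Complex.normSq_nonneg _)
    _ = -dd * nsq ζ := by ring
  have hmono : ∫ ζ, f ζ ∂μ ≤ ∫ ζ, -dd * nsq ζ ∂μ := by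
    refine MeasureTheory.integral_mono_ae hintf (hint2.const_mul _) ?_
    filter_upwards [aux_ae_mem_measSupp μ] with ζ hζ
    exact hptwise ζ hζ
  rw [hre0, MeasureTheory.integral_const_mul] at hmono
  have hnsqnonneg : 0 ≤ ∫ ζ, nsq ζ ∂μ :=
    MeasureTheory.integral_nonneg fun ζ => Complex.normSq_nonneg _
  have hzero : ∫ ζ, nsq ζ ∂μ = 0 := by nlinarith
  have hae : (fun ζ => nsq ζ) =ᵐ[μ] 0 :=
    (MeasureTheory.integral_eq_zero_iff_of_nonneg (fun ζ => Complex.normSq_nonneg _) hint2).mp hzero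
  have hnull : μ {ζ | q.eval ζ ≠ 0} = 0 := by
    have h9 := hae
    rw [Filter.EventuallyEq, MeasureTheory.ae_iff] at h9
    have hsets : {ζ | q.eval ζ ≠ 0} = {ζ | ¬ nsq ζ = (0 : ℂ → ℝ) ζ} := by
      ext ζ
      simp [hnsq, Complex.normSq_eq_zero]
    rw [hsets]
    exact h9
  have hsub : measSupp μ ⊆ {x | q.eval x = 0} := by
    intro z hz
    by_contra hne
    have hopen : IsOpen {w : ℂ | q.eval w ≠ 0} :=
      isOpen_compl_singleton.preimage hqcont
    exact hz {w | q.eval w ≠ 0} (hopen.mem_nhds hne) hnull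
  have hfin : {x : ℂ | q.eval x = 0}.Finite := Polynomial.finite_setOf_isRoot hq0
  exact hsuppInf (hfin.subset hsub)

/-- **Lemma 2.** If `μ ∈ R(E)` then `κ_n/κ_{n+1} → 1/γ`, where `γ = lim_{z→∞} Φ(z)/z`
(so that `1/γ = cap(E)` under the paper's normalization). Here `κ_n` is the (positive)
leading coefficient of the orthonormal polynomial `p_n`. -/
theorem lemma2
    (μ : Measure ℂ) [IsFiniteMeasure μ]
    (hsuppInf : (measSupp μ).Infinite)
    (E : Set ℂ) (hEcomp : IsCompact E) (hsuppE : measSupp μ ⊆ E)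
    (p : ℕ → Polynomial ℂ)
    (hdeg : ∀ n : ℕ, (p n).degree = n)
    (hlead : ∀ n : ℕ, 0 < ((p n).leadingCoeff).re ∧ ((p n).leadingCoeff).im = 0)
    (horth : ∀ n k : ℕ,
      innerMu μ (fun z => (p n).eval z) (fun z => (p k).eval z) = if n = k then 1 else 0)
    (Φ : ℂ → ℂ) (γ : ℝ) (hγ : 0 < γ)
    (hΦdiff : DifferentiableOn ℂ Φ Eᶜ)
    (hΦbij : Set.BijOn Φ Eᶜ {w : ℂ | 1 < ‖w‖})
    (hΦasym : Tendsto (fun z => Φ z / z) (Bornology.cobounded ℂ) (𝓝 (γ : ℂ)))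
    (Ψ : ℂ → ℂ) (hΨcont : ContinuousOn Ψ {w : ℂ | 1 ≤ ‖w‖})
    (hΨinv : ∀ w : ℂ, 1 < ‖w‖ → Ψ w ∈ Eᶜ ∧ Φ (Ψ w) = w)
    (hR : ∀ K : Set ℂ, K ⊆ Eᶜ → IsCompact K →
      TendstoUniformlyOn (fun (n : ℕ) (z : ℂ) => (p n).eval z / (p (n + 1)).eval z)
        (fun z => 1 / Φ z) atTop K)
    :
    Tendsto (fun n : ℕ => (p n).leadingCoeff / (p (n + 1)).leadingCoeff)
      atTop (𝓝 (1 / (γ : ℂ))) := by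
  have hlead0 : ∀ n : ℕ, (p n).leadingCoeff ≠ 0 := by
    intro n h
    have h2 := (hlead n).1
    rw [h] at h2
    simp at h2
  have hp0 : ∀ n : ℕ, p n ≠ 0 := by
    intro n h
    have h2 := hdeg n
    rw [h, Polynomial.degree_zero] at h2
    exact absurd h2 (by simp)
  obtain ⟨B0, hB0⟩ := hEcomp.isBounded.subset_closedBall 0
  set B : ℝ := max B0 1 with hBdef
  have hBpos : (0:ℝ) < B := lt_of_lt_of_le one_pos (le_max_right _ _)
  have hEB : E ⊆ Metric.closedBall 0 B :=
    hB0.trans (Metric.closedBall_subset_closedBall (le_max_left _ _))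
  have hroots := aux_roots_bound μ hsuppInf hEcomp hsuppE p hdeg hlead0 horth hBpos hEB
  set R : ℝ := B + 1 with hRdef
  have hBR : B < R := by rw [hRdef]; linarith
  have hRpos : 0 < R := hBpos.trans hBR
  have houter : ∀ z : ℂ, B < ‖z‖ → z ∈ Eᶜ := by
    intro z hz
    simp only [Set.mem_compl_iff]
    intro hzE
    have h2 := hEB hzE
    rw [Metric.mem_closedBall, Complex.dist_eq, sub_zero] at h2
    linarith
  have hΦne : ∀ z : ℂ, z ∈ Eᶜ → Φ z ≠ 0 := by
    intro z hz
    have h2 := hΦbij.mapsTo hz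
    simp only [Set.mem_setOf_eq] at h2
    intro h
    rw [h] at h2
    simp at h2
    linarith
  have hEopen : IsOpen Eᶜ := hEcomp.isClosed.isOpen_compl
  have hΦdiffAt : ∀ z : ℂ, B < ‖z‖ → DifferentiableAt ℂ (fun w => 1 / Φ w) z := by
    intro z hz
    have hzE := houter z hz
    have h1 : DifferentiableAt ℂ Φ z := hΦdiff.differentiableAt (hEopen.mem_nhds hzE)
    exact (differentiableAt_const 1).div h1 (hΦne z hzE)
  have hγC : ((γ:ℂ)) ≠ 0 := by exact_mod_cast hγ.ne'
  have hlim2 : Tendsto (fun z : ℂ => z * (1 / Φ z) - 1/(γ:ℂ)) (Bornology.cobounded ℂ) (𝓝 0) := by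
    have h1 := hΦasym.inv₀ hγC
    have h2 : Tendsto (fun z : ℂ => z / Φ z) (Bornology.cobounded ℂ) (𝓝 ((γ:ℂ))⁻¹) := by
      refine h1.congr (fun z => ?_)
      rw [inv_div]
    have h3 := h2.sub_const (((γ:ℂ))⁻¹)
    rw [sub_self] at h3
    refine h3.congr (fun z => ?_)
    rw [mul_one_div, one_div]
  have hintPhi : (∮ z in C(0, R), 1 / Φ z) = 2 * Real.pi * Complex.I * (1/(γ:ℂ)) :=
    aux_claim1 hBpos hBR _ _ hΦdiffAt hlim2
  set c : ℕ → ℂ := fun n => (p n).leadingCoeff / (p (n+1)).leadingCoeff with hcdef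
  have hcn0 : ∀ n, c n ≠ 0 := fun n => div_ne_zero (hlead0 n) (hlead0 (n+1))
  have hfdiff : ∀ n : ℕ, ∀ z : ℂ, B < ‖z‖ →
      DifferentiableAt ℂ (fun w => (p n).eval w / (p (n+1)).eval w) z := by
    intro n z hz
    have hden : (p (n+1)).eval z ≠ 0 := by
      intro h
      have := hroots (n+1) z h
      linarith
    exact ((p n).differentiable.differentiableAt).div
      ((p (n+1)).differentiable.differentiableAt) hden
  have hlimn : ∀ n : ℕ, Tendsto (fun z : ℂ => z * ((p n).eval z / (p (n+1)).eval z) - c n)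
      (Bornology.cobounded ℂ) (𝓝 0) := by
    intro n
    set N : Polynomial ℂ := Polynomial.X * p n - Polynomial.C (c n) * p (n+1) with hN
    have hXp0 : Polynomial.X * p n ≠ 0 := mul_ne_zero Polynomial.X_ne_zero (hp0 n)
    have hXp : (Polynomial.X * p n).degree = ((n+1 : ℕ) : WithBot ℕ) := by
      rw [Polynomial.degree_mul, Polynomial.degree_X, hdeg n]
      push_cast
      ring
    have hCp : (Polynomial.C (c n) * p (n+1)).degree = ((n+1:ℕ) : WithBot ℕ) := by
      rw [Polynomial.degree_C_mul (hcn0 n), hdeg (n+1)]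
    have hlcX : (Polynomial.X * p n).leadingCoeff = (p n).leadingCoeff := by
      rw [Polynomial.leadingCoeff_mul, Polynomial.leadingCoeff_X, one_mul]
    have hlcC : (Polynomial.C (c n) * p (n+1)).leadingCoeff = (p n).leadingCoeff := by
      rw [Polynomial.leadingCoeff_mul, Polynomial.leadingCoeff_C, hcdef]
      exact div_mul_cancel₀ _ (hlead0 (n+1))
    have hNdeg : N.degree < (p (n+1)).degree := by
      rw [hdeg (n+1)]
      have h4 : N.degree < (Polynomial.X * p n).degree :=
        Polynomial.degree_sub_lt (hXp.trans hCp.symm) hXp0 (hlcX.trans hlcC.symm)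
      rw [hXp] at h4
      exact_mod_cast h4
    have h0 := aux_poly_div_zero N (p (n+1)) hNdeg
    refine h0.congr' ?_
    filter_upwards [aux_ev_poly_ne_zero (p (n+1)) (hp0 (n+1))] with z hz
    rw [hN, Polynomial.eval_sub, Polynomial.eval_mul, Polynomial.eval_mul,
      Polynomial.eval_X, Polynomial.eval_C]
    field_simp
  have hintn : ∀ n : ℕ, (∮ z in C(0,R), (p n).eval z / (p (n+1)).eval z)
      = 2 * Real.pi * Complex.I * c n :=
    fun n => aux_claim1 hBpos hBR _ _ (hfdiff n) (hlimn n)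
  have hsphere_norm : ∀ z ∈ Metric.sphere (0:ℂ) R, B < ‖z‖ := by
    intro z hz
    rw [Metric.mem_sphere, Complex.dist_eq, sub_zero] at hz
    rw [hz]
    exact hBR
  have hsphere_sub : Metric.sphere (0:ℂ) R ⊆ Eᶜ := fun z hz =>
    houter z (hsphere_norm z hz)
  have hunif := hR (Metric.sphere 0 R) hsphere_sub (isCompact_sphere 0 R)
  rw [Metric.tendstoUniformlyOn_iff] at hunif
  rw [Metric.tendsto_atTop]
  intro ε hε
  have hε' : (0:ℝ) < ε / (2 * R) := by positivity
  obtain ⟨N0, hN0⟩ := eventually_atTop.mp (hunif (ε/(2*R)) hε')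
  refine ⟨N0, fun n hn => ?_⟩
  have hnear : ∀ z ∈ Metric.sphere (0:ℂ) R,
      ‖(p n).eval z / (p (n+1)).eval z - 1/Φ z‖ ≤ ε/(2*R) := by
    intro z hz
    have h6 := hN0 n hn z hz
    rw [dist_comm, dist_eq_norm] at h6
    exact h6.le
  have hcint1 : CircleIntegrable (fun z => (p n).eval z / (p (n+1)).eval z) 0 R :=
    ContinuousOn.circleIntegrable hRpos.le (fun z hz =>
      ((hfdiff n z (hsphere_norm z hz)).continuousAt).continuousWithinAt)
  have hcint2 : CircleIntegrable (fun z => 1/Φ z) 0 R :=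
    ContinuousOn.circleIntegrable hRpos.le (fun z hz =>
      ((hΦdiffAt z (hsphere_norm z hz)).continuousAt).continuousWithinAt)
  have hsubint := circleIntegral.integral_sub hcint1 hcint2
  have h5 : (2*Real.pi*Complex.I : ℂ) * (c n - 1/(γ:ℂ)) =
      ∮ z in C(0,R), ((p n).eval z / (p (n+1)).eval z - 1/Φ z) := by
    rw [hsubint, hintn n, hintPhi]
    ring
  have hkey : ‖(2*Real.pi*Complex.I : ℂ) * (c n - 1/(γ:ℂ))‖ ≤ 2*Real.pi*R*(ε/(2*R)) := by
    rw [h5]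
    exact circleIntegral.norm_integral_le_of_norm_le_const hRpos.le hnear
  have hnorm2pi : ‖(2*Real.pi*Complex.I : ℂ)‖ = 2*Real.pi := by
    simp [norm_mul, Complex.norm_real, Complex.norm_I, abs_of_pos Real.pi_pos]
  rw [norm_mul, hnorm2pi] at hkey
  have hfin : ‖c n - 1/(γ:ℂ)‖ ≤ ε/2 := by
    have hπ := Real.pi_pos
    have hR2 : 2*Real.pi*R*(ε/(2*R)) = Real.pi * ε := by field_simp
    rw [hR2] at hkey
    nlinarith
  have : dist ((p n).leadingCoeff / (p (n+1)).leadingCoeff) (1/(γ:ℂ)) = ‖c n - 1/(γ:ℂ)‖ :=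
    dist_eq_norm _ _
  rw [this]
  linarith
end

section
/- Suppose μ ∈ R(E). Then |p_n(z)|^{1/n} → |Φ(z)| as n → ∞, uniformly on every compact subset of ℂ∖E. -/
open MeasureTheory Polynomial Filter Topology Set
open scoped ENNReal

private lemma rpow_root_tendsto_one (c : ℝ) (hc : 0 < c) :
    Tendsto (fun n : ℕ => c ^ ((1:ℝ)/n)) atTop (𝓝 1) := by
  have h : (fun n : ℕ => c ^ ((1:ℝ)/n)) = fun n : ℕ => Real.exp (Real.log c * ((1:ℝ)/n)) := by
    funext n; rw [Real.rpow_def_of_pos hc]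
  rw [h]
  have h0 : Tendsto (fun n : ℕ => Real.log c * ((1:ℝ)/n)) atTop (𝓝 0) := by
    simpa using tendsto_one_div_atTop_nhds_zero_nat.const_mul (Real.log c)
  simpa [Function.comp_def] using (Real.continuous_exp.continuousAt.tendsto.comp h0)

private lemma ratio_squeeze {u v t η ε₀ : ℝ} (hu : 0 ≤ u) (hv : 0 < v) (ht : 0 < t)
    (hη0 : 0 < η) (hη8 : η ≤ 1/8) (hfact : ε₀ * t ≤ η/2)
    (h2 : u ≤ (1/t + ε₀) * v) (h2' : (1/t - ε₀) * v ≤ u) :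
    (1-η) * t * u ≤ v ∧ v ≤ (1+η) * t * u := by
  have hinv : t * (1/t) = 1 := mul_one_div_cancel (ne_of_gt ht)
  constructor
  · have h3 : t * u ≤ (1 + ε₀ * t) * v := by
      have h4 := mul_le_mul_of_nonneg_left h2 ht.le
      calc t * u ≤ t * ((1/t + ε₀) * v) := h4
        _ = (t * (1/t)) * v + ε₀ * t * v := by ring
        _ = (1 + ε₀ * t) * v := by rw [hinv]; ring
    have h5 : t * u ≤ (1 + η/2) * v := by
      refine h3.trans (mul_le_mul_of_nonneg_right (by linarith) hv.le)
    have h6 : (1-η) * (t * u) ≤ (1-η) * ((1 + η/2) * v) :=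
      mul_le_mul_of_nonneg_left h5 (by linarith)
    nlinarith [mul_nonneg hη0.le hv.le, mul_nonneg (mul_nonneg hη0.le hη0.le) hv.le]
  · have h3 : (1 - ε₀ * t) * v ≤ t * u := by
      have h4 := mul_le_mul_of_nonneg_left h2' ht.le
      calc (1 - ε₀ * t) * v = (t * (1/t)) * v - ε₀ * t * v := by rw [hinv]; ring
        _ = t * ((1/t - ε₀) * v) := by ring
        _ ≤ t * u := h4
    have h5 : (1 - η/2) * v ≤ t * u := by
      refine le_trans (mul_le_mul_of_nonneg_right (by linarith) hv.le) h3
    have h6 : (1+η) * ((1 - η/2) * v) ≤ (1+η) * (t * u) :=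
      mul_le_mul_of_nonneg_left h5 (by linarith)
    nlinarith [mul_nonneg (mul_nonneg hη0.le (show (0:ℝ) ≤ 1-η by linarith)) hv.le]



set_option maxHeartbeats 1000000 in
/-- If `μ ∈ R(E)`, then `|p_n(z)|^{1/n} → |Φ(z)|` uniformly on every compact subset
of `ℂ∖E`. -/
theorem nthRoot_asymptotics_p
    (μ : Measure ℂ) [IsFiniteMeasure μ]
    (hsuppInf : (measSupp μ).Infinite)
    (E : Set ℂ) (hEcomp : IsCompact E) (hsuppE : measSupp μ ⊆ E)
    (p : ℕ → Polynomial ℂ)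
    (hdeg : ∀ n : ℕ, (p n).degree = n)
    (hlead : ∀ n : ℕ, 0 < ((p n).leadingCoeff).re ∧ ((p n).leadingCoeff).im = 0)
    (horth : ∀ n k : ℕ,
      innerMu μ (fun z => (p n).eval z) (fun z => (p k).eval z) = if n = k then 1 else 0)
    (Φ : ℂ → ℂ) (γ : ℝ) (hγ : 0 < γ)
    (hΦdiff : DifferentiableOn ℂ Φ Eᶜ)
    (hΦbij : Set.BijOn Φ Eᶜ {w : ℂ | 1 < ‖w‖})
    (hΦasym : Tendsto (fun z => Φ z / z) (Bornology.cobounded ℂ) (𝓝 (γ : ℂ)))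
    (Ψ : ℂ → ℂ) (hΨcont : ContinuousOn Ψ {w : ℂ | 1 ≤ ‖w‖})
    (hΨinv : ∀ w : ℂ, 1 < ‖w‖ → Ψ w ∈ Eᶜ ∧ Φ (Ψ w) = w)
    (hR : ∀ K : Set ℂ, K ⊆ Eᶜ → IsCompact K →
      TendstoUniformlyOn (fun (n : ℕ) (z : ℂ) => (p n).eval z / (p (n + 1)).eval z)
        (fun z => 1 / Φ z) atTop K)
    :
    ∀ K : Set ℂ, K ⊆ Eᶜ → IsCompact K →
      TendstoUniformlyOn
        (fun (n : ℕ) (z : ℂ) => ‖(p n).eval z‖ ^ ((1 : ℝ) / n))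
        (fun z => ‖Φ z‖) atTop K := by
  intro K hKE hKc
  rcases K.eq_empty_or_nonempty with rfl | hKne
  · rw [Metric.tendstoUniformlyOn_iff]
    intro ε hε
    filter_upwards with n z hz
    exact absurd hz (Set.notMem_empty z)
  have hΦcont : ContinuousOn Φ K := (hΦdiff.continuousOn).mono hKE
  set t : ℂ → ℝ := fun z => ‖Φ z‖ with ht
  have htcont : ContinuousOn t K := hΦcont.norm
  obtain ⟨a, ha1, htlb⟩ : ∃ a : ℝ, 1 < a ∧ ∀ z ∈ K, a ≤ t z := by
    obtain ⟨z₀, hz₀K, hz₀min⟩ := hKc.exists_isMinOn hKne htcont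
    exact ⟨t z₀, by simpa using hΦbij.mapsTo (hKE hz₀K),
      fun z hz => isMinOn_iff.1 hz₀min z hz⟩
  obtain ⟨b, hb1, htub⟩ : ∃ b : ℝ, 1 < b ∧ ∀ z ∈ K, t z ≤ b := by
    obtain ⟨z₁, hz₁K, hz₁max⟩ := hKc.exists_isMaxOn hKne htcont
    obtain ⟨zw, hzw⟩ := hKne
    exact ⟨t z₁, lt_of_lt_of_le (by simpa using hΦbij.mapsTo (hKE hzw))
      (isMaxOn_iff.1 hz₁max zw hzw), fun z hz => isMaxOn_iff.1 hz₁max z hz⟩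
  have hb0 : (0:ℝ) < b := by linarith
  have htpos : ∀ z ∈ K, 0 < t z := fun z hz => lt_trans one_pos (lt_of_lt_of_le ha1 (htlb z hz))
  rw [Metric.tendstoUniformlyOn_iff]
  intro ε hε
  obtain ⟨η, hη0, hη8, hηε⟩ : ∃ η : ℝ, 0 < η ∧ η ≤ 1/8 ∧ 3*η*b < ε := by
    refine ⟨min (ε/(4*b)) (1/8), lt_min (by positivity) (by norm_num), min_le_right _ _, ?_⟩
    have h1 : min (ε/(4*b)) (1/8) ≤ ε/(4*b) := min_le_left _ _
    have h0 : 0 < min (ε/(4*b)) (1/8) := lt_min (by positivity) (by norm_num)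
    have h3 : 3*(min (ε/(4*b)) (1/8))*b ≤ 3*(ε/(4*b))*b := by nlinarith
    have h2 : 3*(ε/(4*b))*b = 3/4*ε := by field_simp
    nlinarith
  obtain ⟨ε₀, hε₀0, hε₀b⟩ : ∃ ε₀ : ℝ, 0 < ε₀ ∧ ε₀ * b * (1+η) = η/2 := by
    refine ⟨η/(2*b*(1+η)), by positivity, by field_simp⟩
  have hRK := hR K hKE hKc
  rw [Metric.tendstoUniformlyOn_iff] at hRK
  obtain ⟨N₁, hN₁⟩ := (eventually_atTop.1 (hRK ε₀ hε₀0))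
  -- key step bound
  have key : ∀ n, N₁ ≤ n → ∀ z ∈ K, (p n).eval z ≠ 0 ∧
      (1-η) * t z * ‖(p n).eval z‖ ≤ ‖(p (n+1)).eval z‖ ∧
      ‖(p (n+1)).eval z‖ ≤ (1+η) * t z * ‖(p n).eval z‖ := by
    intro n hn z hz
    have hd := hN₁ n hn z hz
    set A := (p n).eval z with hA
    set B := (p (n+1)).eval z with hB
    have htz0 : 0 < t z := htpos z hz
    have htzb : t z ≤ b := htub z hz
    have hfact : ε₀ * t z ≤ η/2 := by
      have h1 : ε₀ * t z ≤ ε₀ * b := mul_le_mul_of_nonneg_left htzb hε₀0.le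
      nlinarith [mul_nonneg (mul_nonneg hε₀0.le hb0.le) hη0.le]
    have hΦne : Φ z ≠ 0 := by
      intro h
      have h1 : (1:ℝ) < ‖Φ z‖ := lt_of_lt_of_le ha1 (htlb z hz)
      rw [h, norm_zero] at h1; linarith
    have h1t : ‖1/Φ z‖ = 1/t z := by
      simp [ht, norm_div]
    rw [Complex.dist_eq] at hd
    have habs : |‖A/B‖ - 1/t z| < ε₀ := by
      calc |‖A/B‖ - 1/t z| = |‖A/B‖ - ‖1/Φ z‖| := by rw [h1t]
        _ ≤ ‖A/B - 1/Φ z‖ := abs_norm_sub_norm_le _ _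
        _ = ‖1/Φ z - A/B‖ := by rw [norm_sub_rev]
        _ < ε₀ := hd
    have hlow : 1/t z - ε₀ ≤ ‖A/B‖ := by
      have := abs_lt.1 habs; linarith [this.1]
    have hup : ‖A/B‖ ≤ 1/t z + ε₀ := by
      have := abs_lt.1 habs; linarith [this.2]
    have hpos : 0 < 1/t z - ε₀ := by
      have h1b : 1/b ≤ 1/t z := one_div_le_one_div_of_le htz0 htzb
      have h2 : ε₀ * b < 1 := by nlinarith
      have h3 : ε₀ < 1/b := by rw [lt_div_iff₀ hb0]; linarith
      linarith
    have hABne : A/B ≠ 0 := by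
      intro h
      rw [h] at hlow; simp at hlow
      have : (0:ℝ) < 1/t z - ε₀ := hpos
      rw [one_div] at this
      linarith
    have hAne : A ≠ 0 := by
      intro h; exact hABne (by rw [h]; simp)
    have hBne : B ≠ 0 := by
      intro h; exact hABne (by rw [h]; simp)
    have hv : 0 < ‖B‖ := norm_pos_iff.mpr hBne
    have hu : 0 ≤ ‖A‖ := norm_nonneg A
    have hr : ‖A/B‖ = ‖A‖ / ‖B‖ := norm_div _ _
    rw [hr] at hup hlow
    have h2 : ‖A‖ ≤ (1/t z + ε₀) * ‖B‖ := (div_le_iff₀ hv).1 hup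
    have h2' : (1/t z - ε₀) * ‖B‖ ≤ ‖A‖ := (le_div_iff₀ hv).1 hlow
    have hres := ratio_squeeze hu hv htz0 hη0 hη8 hfact h2 h2'
    exact ⟨hAne, hres.1, hres.2⟩
  have h1η : (0:ℝ) < 1 - η := by linarith
  -- telescoping product bounds
  have tele : ∀ z ∈ K, ∀ m : ℕ,
      ‖(p N₁).eval z‖ * ((1-η) * t z)^m ≤ ‖(p (N₁+m)).eval z‖ ∧
      ‖(p (N₁+m)).eval z‖ ≤ ‖(p N₁).eval z‖ * ((1+η) * t z)^m := by
    intro z hz m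
    induction m with
    | zero => simp
    | succ m ih =>
      have hk := key (N₁+m) (Nat.le_add_right _ _) z hz
      have htz0 : 0 < t z := htpos z hz
      have hnn1 : (0:ℝ) ≤ (1-η) * t z := by nlinarith
      have hnn2 : (0:ℝ) ≤ (1+η) * t z := by nlinarith
      have hidx : N₁ + (m+1) = (N₁ + m) + 1 := rfl
      constructor
      · calc ‖(p N₁).eval z‖ * ((1-η) * t z)^(m+1)
            = ((1-η) * t z) * (‖(p N₁).eval z‖ * ((1-η) * t z)^m) := by ring
          _ ≤ ((1-η) * t z) * ‖(p (N₁+m)).eval z‖ :=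
              mul_le_mul_of_nonneg_left ih.1 hnn1
          _ = (1-η) * t z * ‖(p (N₁+m)).eval z‖ := by ring
          _ ≤ ‖(p ((N₁+m)+1)).eval z‖ := hk.2.1
          _ = ‖(p (N₁+(m+1))).eval z‖ := by rw [hidx]
      · calc ‖(p (N₁+(m+1))).eval z‖
            = ‖(p ((N₁+m)+1)).eval z‖ := by rw [hidx]
          _ ≤ (1+η) * t z * ‖(p (N₁+m)).eval z‖ := hk.2.2
          _ ≤ (1+η) * t z * (‖(p N₁).eval z‖ * ((1+η) * t z)^m) :=
              mul_le_mul_of_nonneg_left ih.2 hnn2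
          _ = ‖(p N₁).eval z‖ * ((1+η) * t z)^(m+1) := by ring
  -- extremes of |p N₁| on K
  have hPNcont : ContinuousOn (fun z => ‖(p N₁).eval z‖) K :=
    (continuous_norm.comp (p N₁).continuous_aeval).continuousOn
  obtain ⟨c₀, hc₀, hc₀le⟩ : ∃ c₀ : ℝ, 0 < c₀ ∧ ∀ z ∈ K, c₀ ≤ ‖(p N₁).eval z‖ := by
    obtain ⟨w₀, hw₀K, hw₀⟩ := hKc.exists_isMinOn hKne hPNcont
    exact ⟨‖(p N₁).eval w₀‖, norm_pos_iff.mpr (key N₁ le_rfl w₀ hw₀K).1,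
      fun z hz => isMinOn_iff.1 hw₀ z hz⟩
  obtain ⟨d₀, hd₀, hd₀le⟩ : ∃ d₀ : ℝ, 0 < d₀ ∧ ∀ z ∈ K, ‖(p N₁).eval z‖ ≤ d₀ := by
    obtain ⟨w₁, hw₁K, hw₁⟩ := hKc.exists_isMaxOn hKne hPNcont
    exact ⟨‖(p N₁).eval w₁‖, norm_pos_iff.mpr (key N₁ le_rfl w₁ hw₁K).1,
      fun z hz => isMaxOn_iff.1 hw₁ z hz⟩
  have ha0 : (0:ℝ) < a := by linarith
  have hD : (0:ℝ) < ((1-η)*b)^N₁ := pow_pos (by nlinarith) N₁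
  have hD' : (0:ℝ) < ((1+η)*a)^N₁ := pow_pos (by nlinarith) N₁
  set Cl := c₀ / ((1-η)*b)^N₁ with hCldef
  set Cu := d₀ / ((1+η)*a)^N₁ with hCudef
  have hCl : 0 < Cl := div_pos hc₀ hD
  have hCu : 0 < Cu := div_pos hd₀ hD'
  -- global bounds for n ≥ N₁
  have bnd : ∀ n, N₁ ≤ n → ∀ z ∈ K,
      Cl * ((1-η) * t z)^n ≤ ‖(p n).eval z‖ ∧
      ‖(p n).eval z‖ ≤ Cu * ((1+η) * t z)^n := by
    intro n hn z hz
    obtain ⟨m, rfl⟩ := Nat.exists_eq_add_of_le hn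
    have htz0 : 0 < t z := htpos z hz
    have hnn1 : (0:ℝ) ≤ (1-η) * t z := by nlinarith
    have hnn2 : (0:ℝ) ≤ (1+η) * t z := by nlinarith
    constructor
    · have pow_le : ((1-η) * t z)^N₁ ≤ ((1-η) * b)^N₁ := by
        apply pow_le_pow_left₀ hnn1
        nlinarith [htub z hz]
      have hstep : Cl * ((1-η)*t z)^N₁ ≤ c₀ := by
        rw [hCldef, div_mul_eq_mul_div, div_le_iff₀ hD]
        exact mul_le_mul_of_nonneg_left pow_le hc₀.le
      calc Cl * ((1-η)*t z)^(N₁+m)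
          = (Cl * ((1-η)*t z)^N₁) * ((1-η)*t z)^m := by rw [pow_add]; ring
        _ ≤ c₀ * ((1-η)*t z)^m :=
            mul_le_mul_of_nonneg_right hstep (pow_nonneg hnn1 m)
        _ ≤ ‖(p N₁).eval z‖ * ((1-η)*t z)^m :=
            mul_le_mul_of_nonneg_right (hc₀le z hz) (pow_nonneg hnn1 m)
        _ ≤ ‖(p (N₁+m)).eval z‖ := (tele z hz m).1
    · have pow_ge : ((1+η) * a)^N₁ ≤ ((1+η) * t z)^N₁ := by
        apply pow_le_pow_left₀ (by nlinarith)
        nlinarith [htlb z hz]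
      have hstep : d₀ ≤ Cu * ((1+η)*t z)^N₁ := by
        rw [hCudef, div_mul_eq_mul_div, le_div_iff₀ hD']
        exact mul_le_mul_of_nonneg_left pow_ge hd₀.le
      calc ‖(p (N₁+m)).eval z‖
          ≤ ‖(p N₁).eval z‖ * ((1+η)*t z)^m := (tele z hz m).2
        _ ≤ d₀ * ((1+η)*t z)^m :=
            mul_le_mul_of_nonneg_right (hd₀le z hz) (pow_nonneg hnn2 m)
        _ ≤ (Cu * ((1+η)*t z)^N₁) * ((1+η)*t z)^m :=
            mul_le_mul_of_nonneg_right hstep (pow_nonneg hnn2 m)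
        _ = Cu * ((1+η)*t z)^(N₁+m) := by rw [pow_add]; ring
  -- n-th roots of the constants tend to 1
  have hev1 : ∀ᶠ n : ℕ in atTop, 1 - η < Cl ^ ((1:ℝ)/n) :=
    (rpow_root_tendsto_one Cl hCl).eventually (eventually_gt_nhds (by linarith))
  have hev2 : ∀ᶠ n : ℕ in atTop, Cu ^ ((1:ℝ)/n) < 1 + η :=
    (rpow_root_tendsto_one Cu hCu).eventually (eventually_lt_nhds (by linarith))
  filter_upwards [hev1, hev2, eventually_ge_atTop N₁, eventually_ge_atTop 1] with n h1 h2 hn hn1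
  intro z hz
  have htz0 : 0 < t z := htpos z hz
  have hnn1 : (0:ℝ) ≤ (1-η) * t z := by nlinarith
  have hnn2 : (0:ℝ) ≤ (1+η) * t z := by nlinarith
  obtain ⟨hbl, hbu⟩ := bnd n hn z hz
  have hnpos : (0:ℝ) < (n:ℝ) := by exact_mod_cast Nat.pos_of_ne_zero (by omega)
  have hinvnn : (0:ℝ) ≤ (1:ℝ)/n := by positivity
  have hsimpl : ∀ (C x : ℝ), 0 < C → 0 ≤ x → (C * x^n) ^ ((1:ℝ)/n) = C ^ ((1:ℝ)/n) * x := by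
    intro C x hC hx
    rw [Real.mul_rpow hC.le (pow_nonneg hx n), ← Real.rpow_natCast x n, ← Real.rpow_mul hx]
    rw [mul_one_div_cancel (ne_of_gt hnpos), Real.rpow_one]
  have hxlo : Cl ^ ((1:ℝ)/n) * ((1-η) * t z) ≤ ‖(p n).eval z‖ ^ ((1:ℝ)/n) := by
    rw [← hsimpl Cl ((1-η) * t z) hCl hnn1]
    exact Real.rpow_le_rpow (by positivity) hbl hinvnn
  have hxup : ‖(p n).eval z‖ ^ ((1:ℝ)/n) ≤ Cu ^ ((1:ℝ)/n) * ((1+η) * t z) := by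
    rw [← hsimpl Cu ((1+η) * t z) hCu hnn2]
    exact Real.rpow_le_rpow (norm_nonneg _) hbu hinvnn
  have hl2 : (1-η) * ((1-η) * t z) ≤ ‖(p n).eval z‖ ^ ((1:ℝ)/n) :=
    le_trans (mul_le_mul_of_nonneg_right h1.le hnn1) hxlo
  have hu2 : ‖(p n).eval z‖ ^ ((1:ℝ)/n) ≤ (1+η) * ((1+η) * t z) :=
    le_trans hxup (mul_le_mul_of_nonneg_right h2.le hnn2)
  have e1 : t z - ‖(p n).eval z‖ ^ ((1:ℝ)/n) ≤ 2*η*t z := by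
    nlinarith [mul_nonneg (mul_nonneg hη0.le hη0.le) htz0.le]
  have e2 : ‖(p n).eval z‖ ^ ((1:ℝ)/n) - t z ≤ 3*η*t z := by
    nlinarith [mul_nonneg (mul_nonneg hη0.le (show (0:ℝ) ≤ 1/8 - η by linarith)) htz0.le]
  have e3 : η * t z ≤ η * b := mul_le_mul_of_nonneg_left (htub z hz) hη0.le
  have e4 : 0 < η * b := mul_pos hη0 hb0
  rw [Real.dist_eq, abs_lt]
  constructor <;> nlinarith [e1, e2, e3, e4, hηε]
end
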